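/- Let (V,d,b) be an acyclic information network, let A ⊆ V\{d} be a transient initial set, and run the NLT dynamics with empty permanent initial set. Then for every non-void node v and every 1 ≤ t ≤ T: E[X^t_v(A,∅)] = ∑_{u∈A} (b^t) v u, where b^t is the t-th matrix power of b (i.e., the probability that v is active at time t equals the probability that a random walk with transition matrix b started at v is in A at time t). -/

import Mathlib

open MeasureTheory

/-- An information network: a finite node set `V` with a distinguished void node `d`
and a row-stochastic weight matrix `b` with entries in `[0,1]` and `b d d = 1`. -/
structure InfoNetwork (V : Type*) [Fintype V] where
  d : V
  b : V → V → ℝ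
  b_nonneg : ∀ v u, 0 ≤ b v u
  b_le_one : ∀ v u, b v u ≤ 1
  row_sum : ∀ v, ∑ u, b v u = 1
  void_loop : b d d = 1

/-- The uniform probability measure on the interval `(0,1)`. -/
noncomputable def unifMeasure : Measure ℝ := volume.restrict (Set.Ioo (0:ℝ) 1)

/-- Product over `V` of uniform measures on `(0,1)`: the distribution of the thresholds. -/
noncomputable def thresholdMeasure (V : Type*) [Fintype V] : Measure (V → ℝ) :=
  Measure.pi fun _ : V => unifMeasure

namespace InfoNetwork

variable {V : Type*} [Fintype V]

/-- The set of active nodes at time `t` under the non-progressive linear threshold model,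
with transient initial set `A`, permanent initial set `Ahat` and thresholds `θ`. -/
noncomputable def activeSet (N : InfoNetwork V) (A Ahat : Set V) (θ : V → ℝ) : ℕ → Set V
  | 0 => A ∪ Ahat
  | t+1 => Ahat ∪
      {v | v ∉ Ahat ∧ θ v ≤ ∑ u, (N.activeSet A Ahat θ t).indicator (N.b v) u}

/-- `E[X^t_v(A,Ahat)]`: the probability (over the random thresholds) that `v` is active
at time `t`. -/
noncomputable def EX (N : InfoNetwork V) (A Ahat : Set V) (t : ℕ) (v : V) : ℝ :=
  (thresholdMeasure V {θ | v ∈ N.activeSet A Ahat θ t}).toReal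

/-- The expected influence over the period `[1,T]`. -/
noncomputable def sigmaBar (N : InfoNetwork V) (T : ℕ) (A Ahat : Set V) : ℝ :=
  (1 / (T : ℝ)) * ∑ t ∈ Finset.Icc 1 T, ∑ v, N.EX A Ahat t v

/-- The edge relation of the directed graph on `V \ {d}`. -/
def edgeRel (N : InfoNetwork V) (v u : V) : Prop :=
  v ≠ N.d ∧ u ≠ N.d ∧ 0 < N.b v u

/-- The network is acyclic if the directed graph on `V \ {d}` has no directed cycle. -/
def Acyclic (N : InfoNetwork V) : Prop :=
  ∀ v, ¬ Relation.TransGen N.edgeRel v v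

end InfoNetwork

/-- A real-valued set function `f` is submodular on the ground set `S`. -/
def SubmodularOn {V : Type*} (S : Set V) (f : Set V → ℝ) : Prop :=
  ∀ A B : Set V, A ⊆ B → B ⊆ S → ∀ w ∈ S, w ∉ B →
    f (insert w B) - f B ≤ f (insert w A) - f A

section Aux

open Set

variable {V : Type*} [Fintype V] [DecidableEq V] (N : InfoNetwork V)

lemma aux_b_d_eq {u : V} (h : u ≠ N.d) : N.b N.d u = 0 := by
  have h1 : ∑ w, N.b N.d w = 1 := N.row_sum N.d
  rw [← Finset.add_sum_erase Finset.univ (N.b N.d) (Finset.mem_univ N.d), N.void_loop] at h1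
  have h2 : ∑ w ∈ Finset.univ.erase N.d, N.b N.d w = 0 := by linarith
  exact (Finset.sum_eq_zero_iff_of_nonneg (fun w _ => N.b_nonneg N.d w)).mp h2 u
    (Finset.mem_erase.mpr ⟨h, Finset.mem_univ u⟩)

lemma aux_pow_d_eq : ∀ (k : ℕ) {u : V}, u ≠ N.d → (Matrix.of N.b ^ k) N.d u = 0 := by
  intro k
  induction k with
  | zero =>
    intro u h
    rw [pow_zero]
    exact Matrix.one_apply_ne (Ne.symm h)
  | succ k ih =>
    intro u h
    rw [pow_succ', Matrix.mul_apply]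
    refine Finset.sum_eq_zero fun w _ => ?_
    by_cases hw : w = N.d
    · subst hw; rw [ih h, mul_zero]
    · have : (Matrix.of N.b) N.d w = 0 := aux_b_d_eq N hw
      rw [this, zero_mul]

lemma aux_pow_nonneg : ∀ (k : ℕ) (v u : V), 0 ≤ (Matrix.of N.b ^ k) v u := by
  intro k
  induction k with
  | zero =>
    intro v u
    rw [pow_zero, Matrix.one_apply]
    split <;> norm_num
  | succ k ih =>
    intro v u
    rw [pow_succ', Matrix.mul_apply]
    exact Finset.sum_nonneg fun w _ => mul_nonneg (N.b_nonneg v w) (ih w u)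

lemma aux_measurable (A : Set V) : ∀ (t : ℕ) (v : V),
    MeasurableSet {θ : V → ℝ | v ∈ N.activeSet A ∅ θ t} := by
  intro t
  induction t with
  | zero =>
    intro v
    by_cases hv : v ∈ A
    · have : {θ : V → ℝ | v ∈ N.activeSet A ∅ θ 0} = Set.univ := by
        ext θ; simp [InfoNetwork.activeSet, hv]
      rw [this]; exact MeasurableSet.univ
    · have : {θ : V → ℝ | v ∈ N.activeSet A ∅ θ 0} = ∅ := by
        ext θ; simp [InfoNetwork.activeSet, hv]
      rw [this]; exact MeasurableSet.empty
  | succ t ih =>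
    intro v
    have hmem : {θ : V → ℝ | v ∈ N.activeSet A ∅ θ (t+1)}
        = {θ : V → ℝ | θ v ≤ ∑ u, (N.activeSet A ∅ θ t).indicator (N.b v) u} := by
      ext θ; simp [InfoNetwork.activeSet]
    rw [hmem]
    have hg : Measurable fun θ : V → ℝ => ∑ u, (N.activeSet A ∅ θ t).indicator (N.b v) u := by
      apply Finset.measurable_sum
      intro u _
      classical
      have : (fun θ : V → ℝ => (N.activeSet A ∅ θ t).indicator (N.b v) u)
          = fun θ => if u ∈ N.activeSet A ∅ θ t then N.b v u else 0 := by
        funext θ; exact Set.indicator_apply _ _ _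
      rw [this]
      exact Measurable.ite (ih u) measurable_const measurable_const
    exact measurableSet_le (measurable_pi_apply v) hg

end Aux

section Aux2
open Set
set_option linter.unusedSectionVars false

variable {V : Type*} [Fintype V] [DecidableEq V] (N : InfoNetwork V)

lemma aux_indep (A : Set V) (v : V) :
    ∀ (t : ℕ) (u : V), ¬ Relation.ReflTransGen (fun w z => 0 < N.b w z) u v →
    ∀ θ θ' : V → ℝ, (∀ w, w ≠ v → θ w = θ' w) →
    (u ∈ N.activeSet A ∅ θ t ↔ u ∈ N.activeSet A ∅ θ' t) := by
  intro t
  induction t with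
  | zero => intro u _ θ θ' _; simp [InfoNetwork.activeSet]
  | succ t ih =>
    intro u hu θ θ' hagree
    have huv : u ≠ v := fun h => hu (h ▸ Relation.ReflTransGen.refl)
    have hθu : θ u = θ' u := hagree u huv
    have hsum : ∑ w, (N.activeSet A ∅ θ t).indicator (N.b u) w
        = ∑ w, (N.activeSet A ∅ θ' t).indicator (N.b u) w := by
      refine Finset.sum_congr rfl fun w _ => ?_
      by_cases hbw : 0 < N.b u w
      · have hw : ¬ Relation.ReflTransGen (fun w z => 0 < N.b w z) w v :=
          fun h => hu (Relation.ReflTransGen.head hbw h)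
        have hiff := ih w hw θ θ' hagree
        by_cases hmem : w ∈ N.activeSet A ∅ θ t
        · rw [Set.indicator_of_mem hmem, Set.indicator_of_mem (hiff.mp hmem)]
        · rw [Set.indicator_of_notMem hmem,
            Set.indicator_of_notMem (fun h => hmem (hiff.mpr h))]
      · have hb0 : N.b u w = 0 := le_antisymm (not_lt.mp hbw) (N.b_nonneg u w)
        have e1 : (N.activeSet A ∅ θ t).indicator (N.b u) w = 0 := by
          by_cases h : w ∈ N.activeSet A ∅ θ t
          · rw [Set.indicator_of_mem h, hb0]
          · exact Set.indicator_of_notMem h _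
        have e2 : (N.activeSet A ∅ θ' t).indicator (N.b u) w = 0 := by
          by_cases h : w ∈ N.activeSet A ∅ θ' t
          · rw [Set.indicator_of_mem h, hb0]
          · exact Set.indicator_of_notMem h _
        rw [e1, e2]
    simp only [InfoNetwork.activeSet, Set.mem_union, Set.mem_setOf_eq,
      Set.mem_empty_iff_false, false_or, not_false_iff, true_and]
    rw [hθu, hsum]

lemma aux_path_d : ∀ z, Relation.ReflTransGen (fun w z => 0 < N.b w z) N.d z → z = N.d := by
  intro z h
  induction h with
  | refl => rfl
  | tail h1 h2 ih =>
    rw [ih] at h2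
    by_contra hz
    rw [aux_b_d_eq N hz] at h2
    exact lt_irrefl 0 h2

lemma aux_reach (hacyc : N.Acyclic) {v u : V} (hv : v ≠ N.d) (hbu : 0 < N.b v u) :
    ¬ Relation.ReflTransGen (fun w z => 0 < N.b w z) u v := by
  intro h
  by_cases hud : u = N.d
  · subst hud
    exact hv (aux_path_d N v h)
  · have key : ∀ z, Relation.ReflTransGen (fun w z => 0 < N.b w z) u z → z ≠ N.d →
        u = z ∨ Relation.TransGen N.edgeRel u z := by
      intro z hz
      induction hz with
      | refl => intro _; exact Or.inl rfl
      | @tail m z h1 h2 ih =>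
        intro hznd
        have hmd : m ≠ N.d := by
          intro hm
          rw [hm, aux_b_d_eq N hznd] at h2
          exact lt_irrefl 0 h2
        have hedge : N.edgeRel m z := ⟨hmd, hznd, h2⟩
        rcases ih hmd with rfl | tg
        · exact Or.inr (Relation.TransGen.single hedge)
        · exact Or.inr (tg.tail hedge)
    have hedgevu : N.edgeRel v u := ⟨hv, hud, hbu⟩
    rcases key v h hv with rfl | tg
    · exact hacyc u (Relation.TransGen.single hedgevu)
    · exact hacyc v ((Relation.TransGen.single hedgevu).trans tg)

lemma aux_sum_indep (hacyc : N.Acyclic) (A : Set V) {v : V} (hv : v ≠ N.d) (t : ℕ)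
    (θ θ' : V → ℝ) (hagree : ∀ w, w ≠ v → θ w = θ' w) :
    ∑ u, (N.activeSet A ∅ θ t).indicator (N.b v) u
      = ∑ u, (N.activeSet A ∅ θ' t).indicator (N.b v) u := by
  refine Finset.sum_congr rfl fun u _ => ?_
  by_cases hbu : 0 < N.b v u
  · have hiff := aux_indep N A v t u (aux_reach N hacyc hv hbu) θ θ' hagree
    by_cases hmem : u ∈ N.activeSet A ∅ θ t
    · rw [Set.indicator_of_mem hmem, Set.indicator_of_mem (hiff.mp hmem)]
    · rw [Set.indicator_of_notMem hmem,
        Set.indicator_of_notMem (fun h => hmem (hiff.mpr h))]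
  · have hb0 : N.b v u = 0 := le_antisymm (not_lt.mp hbu) (N.b_nonneg v u)
    have e1 : (N.activeSet A ∅ θ t).indicator (N.b v) u = 0 := by
      by_cases h : u ∈ N.activeSet A ∅ θ t
      · rw [Set.indicator_of_mem h, hb0]
      · exact Set.indicator_of_notMem h _
    have e2 : (N.activeSet A ∅ θ' t).indicator (N.b v) u = 0 := by
      by_cases h : u ∈ N.activeSet A ∅ θ' t
      · rw [Set.indicator_of_mem h, hb0]
      · exact Set.indicator_of_notMem h _
    rw [e1, e2]

end Aux2

section Aux3
open Set
set_option linter.unusedSectionVars false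

instance : IsProbabilityMeasure unifMeasure := by
  constructor
  rw [unifMeasure, Measure.restrict_apply_univ, Real.volume_Ioo]
  norm_num

instance (V : Type*) [Fintype V] : IsProbabilityMeasure (thresholdMeasure V) := by
  unfold thresholdMeasure; infer_instance

lemma aux_unif_Iic {c : ℝ} (h0 : 0 ≤ c) (h1 : c ≤ 1) :
    unifMeasure (Set.Iic c) = ENNReal.ofReal c := by
  rw [unifMeasure, Measure.restrict_apply measurableSet_Iic]
  rcases eq_or_lt_of_le h1 with rfl | h1
  · have : Set.Iic (1:ℝ) ∩ Set.Ioo 0 1 = Set.Ioo 0 1 := by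
      ext x; simp only [Set.mem_inter_iff, Set.mem_Iic, Set.mem_Ioo]
      constructor
      · exact fun h => h.2
      · intro h; exact ⟨le_of_lt h.2, h⟩
    rw [this, Real.volume_Ioo]; norm_num
  · have : Set.Iic c ∩ Set.Ioo 0 1 = Set.Ioc 0 c := by
      ext x; simp only [Set.mem_inter_iff, Set.mem_Iic, Set.mem_Ioo, Set.mem_Ioc]
      constructor
      · intro h; exact ⟨h.2.1, h.1⟩
      · intro h; exact ⟨h.2, h.1, lt_of_le_of_lt h.2 h1⟩
    rw [this, Real.volume_Ioc]; simp

variable {V : Type*} [Fintype V] [DecidableEq V] (N : InfoNetwork V)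

lemma aux_coord_le_zero (x : V) : thresholdMeasure V {θ : V → ℝ | θ x ≤ 0} = 0 := by
  have hset : {θ : V → ℝ | θ x ≤ 0}
      = Set.pi Set.univ (fun i => if i = x then Set.Iic (0:ℝ) else Set.univ) := by
    ext θ
    simp only [Set.mem_setOf_eq, Set.mem_pi, Set.mem_univ, true_implies]
    constructor
    · intro h i
      by_cases hi : i = x
      · subst hi; simp [h]
      · simp [hi]
    · intro h
      have := h x
      simpa using this
  rw [hset, thresholdMeasure, Measure.pi_pi]
  refine Finset.prod_eq_zero (Finset.mem_univ x) ?_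
  rw [if_pos rfl]
  rw [unifMeasure, Measure.restrict_apply measurableSet_Iic]
  have : Set.Iic (0:ℝ) ∩ Set.Ioo 0 1 = ∅ := by
    rw [Set.eq_empty_iff_forall_notMem]
    rintro y ⟨h1, h2, -⟩
    exact absurd (lt_of_lt_of_le h2 h1) (lt_irrefl 0)
  rw [this]; simp

lemma aux_mu_d_zero (A : Set V) (hA : A ⊆ {x | x ≠ N.d}) :
    ∀ t, thresholdMeasure V {θ : V → ℝ | N.d ∈ N.activeSet A ∅ θ t} = 0 := by
  intro t
  induction t with
  | zero =>
    have : {θ : V → ℝ | N.d ∈ N.activeSet A ∅ θ 0} = ∅ := by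
      ext θ
      simp only [InfoNetwork.activeSet, Set.union_empty, Set.mem_setOf_eq,
        Set.mem_empty_iff_false, iff_false]
      exact fun h => (hA h) rfl
    rw [this]; simp
  | succ t ih =>
    have hsub : {θ : V → ℝ | N.d ∈ N.activeSet A ∅ θ (t+1)}
        ⊆ {θ : V → ℝ | N.d ∈ N.activeSet A ∅ θ t} ∪ {θ : V → ℝ | θ N.d ≤ 0} := by
      intro θ hθ
      simp only [InfoNetwork.activeSet, Set.mem_union, Set.mem_setOf_eq,
        Set.mem_empty_iff_false, false_or, not_false_iff, true_and] at hθ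
      by_cases hd : N.d ∈ N.activeSet A ∅ θ t
      · exact Or.inl hd
      · right
        have hzero : ∑ u, (N.activeSet A ∅ θ t).indicator (N.b N.d) u = 0 := by
          refine Finset.sum_eq_zero fun u _ => ?_
          by_cases hu : u = N.d
          · subst hu; exact Set.indicator_of_notMem hd _
          · by_cases hm : u ∈ N.activeSet A ∅ θ t
            · rw [Set.indicator_of_mem hm, aux_b_d_eq N hu]
            · exact Set.indicator_of_notMem hm _
        rw [hzero] at hθ
        exact hθ
    refine le_antisymm ?_ zero_le
    calc thresholdMeasure V {θ : V → ℝ | N.d ∈ N.activeSet A ∅ θ (t+1)}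
        ≤ thresholdMeasure V ({θ : V → ℝ | N.d ∈ N.activeSet A ∅ θ t}
            ∪ {θ : V → ℝ | θ N.d ≤ 0}) := measure_mono hsub
      _ ≤ thresholdMeasure V {θ : V → ℝ | N.d ∈ N.activeSet A ∅ θ t}
            + thresholdMeasure V {θ : V → ℝ | θ N.d ≤ 0} := measure_union_le _ _
      _ = 0 := by rw [ih, aux_coord_le_zero]; simp

end Aux3

section Main
open Set
set_option linter.unusedSectionVars false
set_option maxHeartbeats 1000000

variable {V : Type*} [Fintype V] [DecidableEq V] (N : InfoNetwork V)

lemma aux_main (hacyc : N.Acyclic) (A : Set V) (hA : A ⊆ {x | x ≠ N.d}) :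
    ∀ (t : ℕ) (v : V), thresholdMeasure V {θ : V → ℝ | v ∈ N.activeSet A ∅ θ t}
      = ENNReal.ofReal (∑ u, A.indicator ((Matrix.of N.b ^ t) v) u) := by
  intro t
  induction t with
  | zero =>
    intro v
    classical
    have hrhs : ∑ u, A.indicator ((Matrix.of N.b ^ 0) v) u = if v ∈ A then 1 else 0 := by
      rw [pow_zero]
      by_cases hv : v ∈ A
      · rw [if_pos hv, Finset.sum_eq_single v]
        · rw [Set.indicator_of_mem hv, Matrix.one_apply_eq]
        · intro u _ hu
          rw [Set.indicator_apply]
          split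
          · exact Matrix.one_apply_ne (Ne.symm hu)
          · rfl
        · exact fun h => absurd (Finset.mem_univ v) h
      · rw [if_neg hv]
        refine Finset.sum_eq_zero fun u _ => ?_
        rw [Set.indicator_apply]
        split
        · rename_i h; exact Matrix.one_apply_ne fun he => hv (he ▸ h)
        · rfl
    rw [hrhs]
    by_cases hv : v ∈ A
    · have hset : {θ : V → ℝ | v ∈ N.activeSet A ∅ θ 0} = Set.univ := by
        ext θ; simp [InfoNetwork.activeSet, hv]
      rw [hset, if_pos hv]
      simp
    · have hset : {θ : V → ℝ | v ∈ N.activeSet A ∅ θ 0} = ∅ := by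
        ext θ; simp [InfoNetwork.activeSet, hv]
      rw [hset, if_neg hv]
      simp
  | succ t ih =>
    intro v
    classical
    by_cases hvd : v = N.d
    · subst hvd
      rw [aux_mu_d_zero N A hA (t+1)]
      have hz : ∑ u, A.indicator ((Matrix.of N.b ^ (t+1)) N.d) u = 0 := by
        refine Finset.sum_eq_zero fun u _ => ?_
        rw [Set.indicator_apply]
        split
        · rename_i h; exact aux_pow_d_eq N (t+1) (hA h)
        · rfl
      rw [hz, ENNReal.ofReal_zero]
    · -- main case
      letI fint1 : Fintype {i : V // i = v} := Subtype.fintype _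
      let e : (V → ℝ) ≃ᵐ (({i : V // i = v} → ℝ) × ({i : V // ¬ i = v} → ℝ)) :=
        MeasurableEquiv.piEquivPiSubtypeProd (π := fun _ : V => ℝ) (fun i => i = v)
      have hmp : MeasurePreserving e (Measure.pi fun _ : V => unifMeasure)
          ((Measure.pi fun _ : {i : V // i = v} => unifMeasure).prod
            (Measure.pi fun _ : {i : V // ¬ i = v} => unifMeasure)) :=
        measurePreserving_piEquivPiSubtypeProd (fun _ : V => unifMeasure) (fun i => i = v)
      set ν₁ := Measure.pi fun _ : {i : V // i = v} => unifMeasure with hν₁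
      set ν₂ := Measure.pi fun _ : {i : V // ¬ i = v} => unifMeasure with hν₂
      have hsymm : ∀ (x : {i : V // i = v} → ℝ) (y : {i : V // ¬ i = v} → ℝ) (w : V),
          e.symm (x, y) w = if h : w = v then x ⟨w, h⟩ else y ⟨w, h⟩ := fun x y w => rfl
      set θ0 : ({i : V // ¬ i = v} → ℝ) → (V → ℝ) := fun y => e.symm (fun _ => (0:ℝ), y)
        with hθ0
      have hθ0app : ∀ (y : {i : V // ¬ i = v} → ℝ) (w : V),
          θ0 y w = if h : w = v then (0:ℝ) else y ⟨w, h⟩ :=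
        fun y w => hsymm (fun _ => (0:ℝ)) y w
      have hagree0 : ∀ (x : {i : V // i = v} → ℝ) (y : {i : V // ¬ i = v} → ℝ) (w : V),
          w ≠ v → e.symm (x, y) w = θ0 y w := by
        intro x y w hw
        rw [hsymm, hθ0app, dif_neg hw, dif_neg hw]
      have hθ0meas : Measurable θ0 :=
        e.symm.measurable.comp (measurable_const.prodMk measurable_id)
      set T : V → Set ({i : V // ¬ i = v} → ℝ) :=
        fun u => {y | u ∈ N.activeSet A ∅ (θ0 y) t} with hTdef
      have hT : ∀ u, MeasurableSet (T u) := fun u => hθ0meas (aux_measurable N A t u)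
      set g : ({i : V // ¬ i = v} → ℝ) → ℝ :=
        fun y => ∑ u, (N.activeSet A ∅ (θ0 y) t).indicator (N.b v) u with hgdef
      have hg0 : ∀ y, 0 ≤ g y := fun y =>
        Finset.sum_nonneg fun u _ => Set.indicator_nonneg (fun a _ => N.b_nonneg v a) u
      have hg1 : ∀ y, g y ≤ 1 := by
        intro y
        rw [hgdef]
        calc ∑ u, (N.activeSet A ∅ (θ0 y) t).indicator (N.b v) u
            ≤ ∑ u, N.b v u := by
              refine Finset.sum_le_sum fun u _ => ?_
              rw [Set.indicator_apply]
              split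
              · exact le_refl _
              · exact N.b_nonneg v u
          _ = 1 := N.row_sum v
      set E : Set (V → ℝ) := {θ : V → ℝ | v ∈ N.activeSet A ∅ θ (t+1)} with hEdef
      have hE : MeasurableSet E := aux_measurable N A (t+1) v
      have hES : e.symm ⁻¹' E = {xy : ({i : V // i = v} → ℝ) × ({i : V // ¬ i = v} → ℝ) |
          xy.1 ⟨v, rfl⟩ ≤ g xy.2} := by
        ext ⟨x, y⟩
        simp only [Set.mem_preimage, hEdef, Set.mem_setOf_eq, InfoNetwork.activeSet,
          Set.mem_union, Set.mem_empty_iff_false, false_or, not_false_iff, true_and]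
        have h1 : e.symm (x, y) v = x ⟨v, rfl⟩ := by rw [hsymm, dif_pos rfl]
        have h2 : ∑ u, (N.activeSet A ∅ (e.symm (x, y)) t).indicator (N.b v) u = g y :=
          aux_sum_indep N hacyc A hvd t _ _ (fun w hw => hagree0 x y w hw)
        rw [h1, h2]
      have hsmeas : MeasurableSet (e.symm ⁻¹' E) := e.symm.measurable hE
      have h1 : thresholdMeasure V E = (ν₁.prod ν₂) (e.symm ⁻¹' E) := by
        have hmm := hmp.measure_preimage hsmeas.nullMeasurableSet
        rw [show e ⁻¹' (e.symm ⁻¹' E) = E from by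
          ext θ; simp [Set.mem_preimage]] at hmm
        exact hmm
      have h2 : (ν₁.prod ν₂) (e.symm ⁻¹' E)
          = ∫⁻ y, ν₁ ((fun x => (x, y)) ⁻¹' (e.symm ⁻¹' E)) ∂ν₂ :=
        Measure.prod_apply_symm hsmeas
      have h3 : ∀ y, ν₁ ((fun x => (x, y)) ⁻¹' (e.symm ⁻¹' E)) = ENNReal.ofReal (g y) := by
        intro y
        have hset : ((fun x => (x, y)) ⁻¹' (e.symm ⁻¹' E))
            = Set.pi Set.univ (fun _ : {i : V // i = v} => Set.Iic (g y)) := by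
          rw [hES]
          ext x
          simp only [Set.mem_preimage, Set.mem_setOf_eq, Set.mem_pi, Set.mem_univ,
            true_implies, Set.mem_Iic]
          constructor
          · intro h i
            have : i = ⟨v, rfl⟩ := Subtype.ext i.2
            rw [this]; exact h
          · intro h; exact h ⟨v, rfl⟩
        rw [hset, hν₁, Measure.pi_pi]
        haveI : Unique {i : V // i = v} := Unique.subtypeEq v
        rw [Finset.prod_const, Finset.card_univ, Fintype.card_unique, pow_one]
        exact aux_unif_Iic (hg0 y) (hg1 y)
      have h5 : ∀ y, ENNReal.ofReal (g y)
          = ∑ u, (T u).indicator (fun _ => ENNReal.ofReal (N.b v u)) y := by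
        intro y
        rw [hgdef, ENNReal.ofReal_sum_of_nonneg
          (fun u _ => Set.indicator_nonneg (fun a _ => N.b_nonneg v a) u)]
        refine Finset.sum_congr rfl fun u _ => ?_
        by_cases hm : u ∈ N.activeSet A ∅ (θ0 y) t
        · rw [Set.indicator_of_mem hm, Set.indicator_of_mem (show y ∈ T u from hm)]
        · rw [Set.indicator_of_notMem hm, Set.indicator_of_notMem
            (show y ∉ T u from hm), ENNReal.ofReal_zero]
      have h6 : ∫⁻ y, ENNReal.ofReal (g y) ∂ν₂
          = ∑ u, ENNReal.ofReal (N.b v u) * ν₂ (T u) := by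
        simp only [h5]
        rw [lintegral_finset_sum _ (fun u _ => measurable_const.indicator (hT u))]
        refine Finset.sum_congr rfl fun u _ => ?_
        rw [lintegral_indicator_const (hT u)]
      have h7 : ∀ u, 0 < N.b v u →
          ν₂ (T u) = thresholdMeasure V {θ : V → ℝ | u ∈ N.activeSet A ∅ θ t} := by
        intro u hbu
        have hEu : MeasurableSet {θ : V → ℝ | u ∈ N.activeSet A ∅ θ t} :=
          aux_measurable N A t u
        have hsetu : e.symm ⁻¹' {θ : V → ℝ | u ∈ N.activeSet A ∅ θ t}
            = Set.univ ×ˢ T u := by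
          ext ⟨x, y⟩
          simp only [Set.mem_preimage, Set.mem_setOf_eq, Set.mem_prod, Set.mem_univ, true_and]
          exact aux_indep N A v t u (aux_reach N hacyc hvd hbu) _ _
            (fun w hw => hagree0 x y w hw)
        have hmm := hmp.measure_preimage ((e.symm.measurable hEu).nullMeasurableSet)
        rw [show e ⁻¹' (e.symm ⁻¹' {θ : V → ℝ | u ∈ N.activeSet A ∅ θ t})
            = {θ : V → ℝ | u ∈ N.activeSet A ∅ θ t} from by
          ext θ; simp [Set.mem_preimage]] at hmm
        rw [hsetu, Measure.prod_prod, measure_univ, one_mul] at hmm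
        exact hmm.symm
      have hrnn : ∀ u, 0 ≤ ∑ w, A.indicator ((Matrix.of N.b ^ t) u) w := fun u =>
        Finset.sum_nonneg fun w _ =>
          Set.indicator_nonneg (fun a _ => aux_pow_nonneg N t u a) w
      have h8 : ∑ u, ENNReal.ofReal (N.b v u) * ν₂ (T u)
          = ENNReal.ofReal (∑ u, N.b v u * ∑ w, A.indicator ((Matrix.of N.b ^ t) u) w) := by
        rw [ENNReal.ofReal_sum_of_nonneg
          (fun u _ => mul_nonneg (N.b_nonneg v u) (hrnn u))]
        refine Finset.sum_congr rfl fun u _ => ?_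
        by_cases hbu : 0 < N.b v u
        · rw [h7 u hbu, ih u, ← ENNReal.ofReal_mul (N.b_nonneg v u)]
        · have hb0 : N.b v u = 0 := le_antisymm (not_lt.mp hbu) (N.b_nonneg v u)
          rw [hb0]
          simp
      have h9 : ∑ u, N.b v u * ∑ w, A.indicator ((Matrix.of N.b ^ t) u) w
          = ∑ w, A.indicator ((Matrix.of N.b ^ (t+1)) v) w := by
        calc ∑ u, N.b v u * ∑ w, A.indicator ((Matrix.of N.b ^ t) u) w
            = ∑ u, ∑ w, N.b v u * A.indicator ((Matrix.of N.b ^ t) u) w := by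
              refine Finset.sum_congr rfl fun u _ => ?_
              rw [Finset.mul_sum]
          _ = ∑ w, ∑ u, N.b v u * A.indicator ((Matrix.of N.b ^ t) u) w := Finset.sum_comm
          _ = ∑ w, A.indicator ((Matrix.of N.b ^ (t+1)) v) w := by
              refine Finset.sum_congr rfl fun w _ => ?_
              by_cases hw : w ∈ A
              · simp only [Set.indicator_of_mem hw]
                rw [pow_succ', Matrix.mul_apply]
                refine Finset.sum_congr rfl fun u _ => ?_
                rw [Matrix.of_apply]
              · simp only [Set.indicator_of_notMem hw, mul_zero, Finset.sum_const_zero]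
      have hμ : thresholdMeasure V E
          = ENNReal.ofReal (∑ w, A.indicator ((Matrix.of N.b ^ (t+1)) v) w) := by
        rw [h1, h2]
        simp only [h3]
        rw [h6, h8, h9]
      exact hμ

end Main


/-- in an acyclic network, for a transient initial set `A` (and empty permanent
set), a non-void node `v` and a time `1 ≤ t ≤ T`, the probability that `v` is active at time
`t` equals `∑_{u ∈ A} (b^t) v u`, the probability that a random walk with transition matrix
`b` started at `v` is in `A` at time `t`. -/
theorem EX_eq_randomWalk {V : Type*} [Fintype V] [DecidableEq V] (N : InfoNetwork V)
    (hacyc : N.Acyclic) (A : Set V) (hA : A ⊆ {x : V | x ≠ N.d})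
    (T : ℕ) (t : ℕ) (ht1 : 1 ≤ t) (htT : t ≤ T) (v : V) (hv : v ≠ N.d) :
    N.EX A ∅ t v = ∑ u, A.indicator ((Matrix.of N.b ^ t) v) u := by
  have h := aux_main N hacyc A hA t v
  simp only [InfoNetwork.EX]
  rw [h, ENNReal.toReal_ofReal]
  exact Finset.sum_nonneg fun u _ =>
    Set.indicator_nonneg (fun a _ => aux_pow_nonneg N t v a) u
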